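/- Let $a : \mathbb{R} \to \mathbb{R}$ be Lipschitz with constant $C_a$ and let $x_1, x_2 : [0,1] \to \mathbb{R}$ be continuous functions satisfying $x_k(t) = u_k + \int_0^t a(x_k(s))\,ds + w_k(t)$ for continuous paths $w_1, w_2$ with $w_k(0)=0$. Let $\eta(t) = e^{C_a t}(u_2 - u_1) + e^{C_a t}\int_0^t e^{-C_a s}\, d(w_2 - w_1)(s)$, assume $u_2 \geq u_1$, and let $\theta = \inf\{s \in [0,1] : x_1(s) = x_2(s)\} \wedge 1$. Then for all $t \in [0, \theta]$, $\eta(t) \geq x_2(t) - x_1(t)$. -/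

import Mathlib

open MeasureTheory intervalIntegral Set

/-- pathwise comparison inequality (Lemma 2.2 of the paper).  The
Riemann–Stieltjes integral `∫_0^t e^{-Ca s} d(w₂-w₁)(s)` is evaluated by its
integration-by-parts representation. -/
theorem stmt1 (a : ℝ → ℝ) (Ca : ℝ) (hCa : 0 ≤ Ca)
    (hLip : ∀ x y, |a x - a y| ≤ Ca * |x - y|)
    (u₁ u₂ : ℝ) (hu : u₁ ≤ u₂)
    (w₁ w₂ x₁ x₂ : ℝ → ℝ)
    (hw₁ : Continuous w₁) (hw₂ : Continuous w₂)
    (hw₁0 : w₁ 0 = 0) (hw₂0 : w₂ 0 = 0)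
    (hx₁c : Continuous x₁) (hx₂c : Continuous x₂)
    (hx₁ : ∀ t ∈ Icc (0:ℝ) 1, x₁ t = u₁ + (∫ s in (0:ℝ)..t, a (x₁ s)) + w₁ t)
    (hx₂ : ∀ t ∈ Icc (0:ℝ) 1, x₂ t = u₂ + (∫ s in (0:ℝ)..t, a (x₂ s)) + w₂ t)
    (η : ℝ → ℝ)
    (hη : ∀ t, η t = Real.exp (Ca * t) * (u₂ - u₁)
        + Real.exp (Ca * t) *
          (Real.exp (-Ca * t) * (w₂ t - w₁ t)
            + Ca * ∫ s in (0:ℝ)..t, Real.exp (-Ca * s) * (w₂ s - w₁ s)))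
    (θ : ℝ)
    (hθ : θ = sInf ({s : ℝ | s ∈ Icc (0:ℝ) 1 ∧ x₁ s = x₂ s} ∪ {1})) :
    ∀ t ∈ Icc (0:ℝ) θ, x₂ t - x₁ t ≤ η t := by
  -- continuity of a
  have hca : Continuous a := by
    have : LipschitzWith (Real.toNNReal Ca) a := by
      apply LipschitzWith.of_dist_le_mul
      intro x y
      rw [Real.dist_eq, Real.dist_eq, Real.coe_toNNReal Ca hCa]
      exact hLip x y
    exact this.continuous
  -- basic facts about θ
  have hSne : ({s : ℝ | s ∈ Icc (0:ℝ) 1 ∧ x₁ s = x₂ s} ∪ {1} : Set ℝ).Nonempty :=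
    ⟨1, Or.inr rfl⟩
  have hlb : ∀ s ∈ ({s : ℝ | s ∈ Icc (0:ℝ) 1 ∧ x₁ s = x₂ s} ∪ {1} : Set ℝ), (0:ℝ) ≤ s := by
    rintro s (⟨⟨h0, _⟩, _⟩ | rfl)
    · exact h0
    · norm_num
  have hθ0 : 0 ≤ θ := hθ ▸ le_csInf hSne hlb
  have hθ1 : θ ≤ 1 := hθ ▸ csInf_le ⟨0, hlb⟩ (Or.inr rfl)
  -- initial values
  have hx₁0 : x₁ 0 = u₁ := by
    have := hx₁ 0 (by norm_num)
    simpa [hw₁0] using this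
  have hx₂0 : x₂ 0 = u₂ := by
    have := hx₂ 0 (by norm_num)
    simpa [hw₂0] using this
  -- x₁ ≤ x₂ on [0, θ]
  have hle : ∀ s ∈ Icc (0:ℝ) θ, x₁ s ≤ x₂ s := by
    intro s hs
    by_contra hcon
    push_neg at hcon
    have hiv := intermediate_value_Icc' hs.1
      ((hx₂c.sub hx₁c).continuousOn : ContinuousOn (fun u => x₂ u - x₁ u) (Icc 0 s))
    have h0mem : (0:ℝ) ∈ Icc (x₂ s - x₁ s) (x₂ 0 - x₁ 0) := by
      constructor
      · linarith
      · rw [hx₁0, hx₂0]; linarith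
    obtain ⟨r, hr, hr0⟩ := hiv h0mem
    have hrS : r ∈ ({s : ℝ | s ∈ Icc (0:ℝ) 1 ∧ x₁ s = x₂ s} ∪ {1} : Set ℝ) := by
      left
      refine ⟨⟨hr.1, le_trans (le_trans hr.2 hs.2) hθ1⟩, by dsimp at hr0; linarith⟩
    have hθr : θ ≤ r := hθ ▸ csInf_le ⟨0, hlb⟩ hrS
    have hrs : r = s := le_antisymm hr.2 (le_trans hs.2 hθr)
    rw [hrs] at hr0
    dsimp at hr0
    linarith
  -- primitive F and its derivative
  have hFint : Continuous fun s => Real.exp (-Ca * s) * (w₂ s - w₁ s) :=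
    (Real.continuous_exp.comp (continuous_const.mul continuous_id)).mul (hw₂.sub hw₁)
  have hFder : ∀ t, HasDerivAt
      (fun u => ∫ s in (0:ℝ)..u, Real.exp (-Ca * s) * (w₂ s - w₁ s))
      (Real.exp (-Ca * t) * (w₂ t - w₁ t)) t := by
    intro t
    exact intervalIntegral.integral_hasDerivAt_right (hFint.intervalIntegrable 0 t)
      (hFint.stronglyMeasurableAtFilter _ _) hFint.continuousAt
  have hFc : Continuous fun u => ∫ s in (0:ℝ)..u, Real.exp (-Ca * s) * (w₂ s - w₁ s) :=
    Differentiable.continuous fun t => (hFder t).differentiableAt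
  -- exp(Ca t) derivative
  have hexp : ∀ t : ℝ, HasDerivAt (fun t => Real.exp (Ca * t)) (Ca * Real.exp (Ca * t)) t := by
    intro t
    have h1 : HasDerivAt (fun t : ℝ => Ca * t) Ca t := by
      simpa using (hasDerivAt_id t).const_mul Ca
    simpa [Function.comp_def, mul_comm] using (Real.hasDerivAt_exp (Ca * t)).comp t h1
  have hee : ∀ t : ℝ, Real.exp (Ca * t) * Real.exp (-Ca * t) = 1 := by
    intro t
    rw [← Real.exp_add]
    have : Ca * t + -Ca * t = 0 := by ring
    rw [this, Real.exp_zero]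
  -- simplified formula for η
  have hη' : ∀ t, η t = Real.exp (Ca * t) * (u₂ - u₁) + (w₂ t - w₁ t)
      + Ca * (Real.exp (Ca * t) * ∫ s in (0:ℝ)..t, Real.exp (-Ca * s) * (w₂ s - w₁ s)) := by
    intro t
    rw [hη t]
    have e1 := hee t
    linear_combination (w₂ t - w₁ t) * e1
  have hηc : Continuous η := by
    have : Continuous fun t => Real.exp (Ca * t) * (u₂ - u₁) + (w₂ t - w₁ t)
        + Ca * (Real.exp (Ca * t) * ∫ s in (0:ℝ)..t, Real.exp (-Ca * s) * (w₂ s - w₁ s)) := by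
      apply Continuous.add
      apply Continuous.add
      · exact (Real.continuous_exp.comp (continuous_const.mul continuous_id)).mul continuous_const
      · exact hw₂.sub hw₁
      · exact continuous_const.mul
          ((Real.continuous_exp.comp (continuous_const.mul continuous_id)).mul hFc)
    have heq : η = fun t => Real.exp (Ca * t) * (u₂ - u₁) + (w₂ t - w₁ t)
        + Ca * (Real.exp (Ca * t) * ∫ s in (0:ℝ)..t, Real.exp (-Ca * s) * (w₂ s - w₁ s)) :=
      funext hη'
    rw [heq]; exact this
  -- η - W is C¹ with derivative Ca·η
  have hφder : ∀ t : ℝ, HasDerivAt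
      (fun u => Real.exp (Ca * u) * (u₂ - u₁)
        + Ca * (Real.exp (Ca * u) * ∫ s in (0:ℝ)..u, Real.exp (-Ca * s) * (w₂ s - w₁ s)))
      (Ca * η t) t := by
    intro t
    have h1 := (hexp t).mul_const (u₂ - u₁)
    have h2 := ((hexp t).mul (hFder t)).const_mul Ca
    have h3 := h1.add h2
    refine h3.congr_deriv (Eq.symm ?_)
    rw [hη' t]
    have e1 := hee t
    linear_combination (-Ca * (w₂ t - w₁ t)) * e1
  -- integral equation for η
  have hB : ∀ t : ℝ, η t = (u₂ - u₁) + (∫ s in (0:ℝ)..t, Ca * η s) + (w₂ t - w₁ t) := by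
    intro t
    have hFTC := intervalIntegral.integral_eq_sub_of_hasDerivAt
      (f := fun u => Real.exp (Ca * u) * (u₂ - u₁)
        + Ca * (Real.exp (Ca * u) * ∫ s in (0:ℝ)..u, Real.exp (-Ca * s) * (w₂ s - w₁ s)))
      (fun s _ => hφder s) ((continuous_const.mul hηc).intervalIntegrable 0 t)
    simp only [intervalIntegral.integral_same, mul_zero, Real.exp_zero, one_mul,
      add_zero] at hFTC
    rw [hη' t, hFTC]
    ring
  -- integral equation for x₂ - x₁
  have hA : ∀ t ∈ Icc (0:ℝ) 1, x₂ t - x₁ t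
      = (u₂ - u₁) + (∫ s in (0:ℝ)..t, (a (x₂ s) - a (x₁ s))) + (w₂ t - w₁ t) := by
    intro t ht
    have hi2 : IntervalIntegrable (fun s => a (x₂ s)) volume 0 t :=
      (hca.comp hx₂c).intervalIntegrable _ _
    have hi1 : IntervalIntegrable (fun s => a (x₁ s)) volume 0 t :=
      (hca.comp hx₁c).intervalIntegrable _ _
    rw [hx₁ t ht, hx₂ t ht, intervalIntegral.integral_sub hi2 hi1]
    ring
  -- the gap function and its integral representation
  have hgc : Continuous fun s => Ca * η s - (a (x₂ s) - a (x₁ s)) :=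
    (continuous_const.mul hηc).sub ((hca.comp hx₂c).sub (hca.comp hx₁c))
  have hh : ∀ t ∈ Icc (0:ℝ) 1, η t - (x₂ t - x₁ t)
      = ∫ s in (0:ℝ)..t, (Ca * η s - (a (x₂ s) - a (x₁ s))) := by
    intro t ht
    have hi3 : IntervalIntegrable (fun s => Ca * η s) volume 0 t :=
      (continuous_const.mul hηc).intervalIntegrable _ _
    have hi4 : IntervalIntegrable (fun s => a (x₂ s) - a (x₁ s)) volume 0 t :=
      ((hca.comp hx₂c).sub (hca.comp hx₁c)).intervalIntegrable _ _
    rw [hB t, hA t ht, intervalIntegral.integral_sub hi3 hi4]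
    ring
  have hhc : Continuous fun s => η s - (x₂ s - x₁ s) := hηc.sub (hx₂c.sub hx₁c)
  -- key inequality: h t ≥ Ca * ∫₀ᵗ h
  have hkey : ∀ t ∈ Icc (0:ℝ) θ,
      Ca * (∫ s in (0:ℝ)..t, (η s - (x₂ s - x₁ s))) ≤ η t - (x₂ t - x₁ t) := by
    intro t ht
    have ht1 : t ∈ Icc (0:ℝ) 1 := ⟨ht.1, le_trans ht.2 hθ1⟩
    rw [hh t ht1, ← intervalIntegral.integral_const_mul]
    apply intervalIntegral.integral_mono_on ht.1
      ((continuous_const.mul hhc).intervalIntegrable _ _)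
      (hgc.intervalIntegrable _ _)
    intro s hs
    have hsθ : s ∈ Icc (0:ℝ) θ := ⟨hs.1, le_trans hs.2 ht.2⟩
    have h1 := hLip (x₂ s) (x₁ s)
    have h2 := hle s hsθ
    have habs : |x₂ s - x₁ s| = x₂ s - x₁ s := abs_of_nonneg (by linarith)
    rw [habs] at h1
    have h3 : a (x₂ s) - a (x₁ s) ≤ Ca * (x₂ s - x₁ s) :=
      le_trans (le_abs_self _) h1
    have : Ca * (η s - (x₂ s - x₁ s)) = Ca * η s - Ca * (x₂ s - x₁ s) := by ring
    show Ca * (η s - (x₂ s - x₁ s)) ≤ _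
    rw [this]
    linarith
  -- M and G
  have hMder : ∀ t : ℝ, HasDerivAt (fun u => ∫ s in (0:ℝ)..u, (η s - (x₂ s - x₁ s)))
      (η t - (x₂ t - x₁ t)) t := fun t =>
    intervalIntegral.integral_hasDerivAt_right (hhc.intervalIntegrable 0 t)
      (hhc.stronglyMeasurableAtFilter _ _) hhc.continuousAt
  have hexpneg : ∀ t : ℝ, HasDerivAt (fun t => Real.exp (-Ca * t))
      (-Ca * Real.exp (-Ca * t)) t := by
    intro t
    have h1 : HasDerivAt (fun t : ℝ => -Ca * t) (-Ca) t := by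
      simpa using (hasDerivAt_id t).const_mul (-Ca)
    simpa [Function.comp_def, mul_comm] using (Real.hasDerivAt_exp (-Ca * t)).comp t h1
  have hGder : ∀ t : ℝ, HasDerivAt
      (fun u => Real.exp (-Ca * u) * ∫ s in (0:ℝ)..u, (η s - (x₂ s - x₁ s)))
      (Real.exp (-Ca * t) * ((η t - (x₂ t - x₁ t))
        - Ca * ∫ s in (0:ℝ)..t, (η s - (x₂ s - x₁ s)))) t := by
    intro t
    have := (hexpneg t).mul (hMder t)
    refine this.congr_deriv (Eq.symm ?_)
    ring
  -- G is monotone on [0, θ]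
  have hGmono : MonotoneOn
      (fun u => Real.exp (-Ca * u) * ∫ s in (0:ℝ)..u, (η s - (x₂ s - x₁ s)))
      (Icc (0:ℝ) θ) := by
    apply monotoneOn_of_deriv_nonneg (convex_Icc 0 θ)
    · exact (Differentiable.continuous fun t => (hGder t).differentiableAt).continuousOn
    · exact (Differentiable.differentiableOn fun t => (hGder t).differentiableAt)
    · intro x hx
      rw [interior_Icc] at hx
      rw [(hGder x).deriv]
      have hxθ : x ∈ Icc (0:ℝ) θ := ⟨le_of_lt hx.1, le_of_lt hx.2⟩
      have := hkey x hxθ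
      have hepos : 0 < Real.exp (-Ca * x) := Real.exp_pos _
      nlinarith
  -- conclusion
  intro t ht
  have hG0 : (fun u => Real.exp (-Ca * u) * ∫ s in (0:ℝ)..u, (η s - (x₂ s - x₁ s))) 0 = 0 := by
    simp
  have h0mem : (0:ℝ) ∈ Icc (0:ℝ) θ := ⟨le_refl _, hθ0⟩
  have hGt := hGmono h0mem ht ht.1
  rw [hG0] at hGt
  have hepos : 0 < Real.exp (-Ca * t) := Real.exp_pos _
  have hGt' : 0 ≤ Real.exp (-Ca * t) * ∫ s in (0:ℝ)..t, (η s - (x₂ s - x₁ s)) := hGt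
  have hMt : 0 ≤ ∫ s in (0:ℝ)..t, (η s - (x₂ s - x₁ s)) := by
    by_contra hcon
    push_neg at hcon
    have := mul_neg_of_pos_of_neg hepos hcon
    linarith
  have := hkey t ht
  nlinarith
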